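/- Let J, M, η, γ > 0, and set c = √(M γ η) and a = 2J√(M γ η). Define V(t) = (J/2) · (c·cosh(a t) + γ·sinh(a t)) / (c·cosh(a t) + M η·sinh(a t)) for t ≥ 0. Then V(0) = J/2, V satisfies the Riccati differential equation V'(t) = −4 M η · V(t)² + γ J² for every t ≥ 0, and lim_{t→∞} V(t) = (J/2)·√(γ/(M η)). -/

import Mathlib

open Filter

/-- **Conditional variance with collective dephasing (Eq. B.5 regime).** With
`c = √(Mγη)` and `a = 2J√(Mγη)`, the function
`V(t) = (J/2)(c cosh(at) + γ sinh(at))/(c cosh(at) + Mη sinh(at))` satisfies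
`V(0) = J/2`, the Riccati equation `V' = −4Mη V² + γJ²` for every `t ≥ 0`, and
`V(t) → (J/2)√(γ/(Mη))` as `t → ∞`. -/
theorem noisy_conditional_variance_riccati
    (J M η γ : ℝ) (hJ : 0 < J) (hM : 0 < M) (hη : 0 < η) (hγ : 0 < γ)
    (c a : ℝ) (hc : c = Real.sqrt (M * γ * η)) (ha : a = 2 * J * Real.sqrt (M * γ * η))
    (V : ℝ → ℝ)
    (hV : ∀ t : ℝ, V t = (J / 2) *
      (c * Real.cosh (a * t) + γ * Real.sinh (a * t)) /
        (c * Real.cosh (a * t) + M * η * Real.sinh (a * t))) :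
    V 0 = J / 2 ∧
    (∀ t : ℝ, 0 ≤ t → HasDerivAt V (-4 * M * η * (V t) ^ 2 + γ * J ^ 2) t) ∧
    Tendsto V atTop (nhds ((J / 2) * Real.sqrt (γ / (M * η)))) := by
  have hMγη : 0 < M * γ * η := by positivity
  have hc0 : 0 < c := hc ▸ Real.sqrt_pos.mpr hMγη
  have hcsq : c ^ 2 = M * γ * η := by
    rw [hc, Real.sq_sqrt hMγη.le]
  have hac : a = 2 * J * c := by rw [ha, hc]
  have ha0 : 0 < a := by rw [hac]; positivity
  have hDpos : ∀ t : ℝ, 0 ≤ t →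
      0 < c * Real.cosh (a * t) + M * η * Real.sinh (a * t) := by
    intro t ht
    have h1 : 0 < c * Real.cosh (a * t) := by positivity
    have h2 : 0 ≤ Real.sinh (a * t) := Real.sinh_nonneg_iff.mpr (by positivity)
    nlinarith
  refine ⟨?_, ?_, ?_⟩
  · simp [hV 0, hc0.ne']
  · intro t ht
    have hD := (hDpos t ht).ne'
    have hlin : HasDerivAt (fun x : ℝ => a * x) a t := by
      simpa using (hasDerivAt_id t).const_mul a
    have hch : HasDerivAt (fun x : ℝ => Real.cosh (a * x)) (Real.sinh (a * t) * a) t :=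
      (Real.hasDerivAt_cosh (a * t)).comp t hlin
    have hsh : HasDerivAt (fun x : ℝ => Real.sinh (a * x)) (Real.cosh (a * t) * a) t :=
      (Real.hasDerivAt_sinh (a * t)).comp t hlin
    have hN : HasDerivAt (fun x : ℝ => c * Real.cosh (a * x) + γ * Real.sinh (a * x))
        (c * (Real.sinh (a * t) * a) + γ * (Real.cosh (a * t) * a)) t :=
      (hch.const_mul c).add (hsh.const_mul γ)
    have hDd : HasDerivAt (fun x : ℝ => c * Real.cosh (a * x) + M * η * Real.sinh (a * x))
        (c * (Real.sinh (a * t) * a) + M * η * (Real.cosh (a * t) * a)) t :=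
      (hch.const_mul c).add (hsh.const_mul (M * η))
    have hQ := ((hN.div hDd hD).const_mul (J / 2))
    have hVeq : V = fun x : ℝ => (J / 2) *
        ((c * Real.cosh (a * x) + γ * Real.sinh (a * x)) /
          (c * Real.cosh (a * x) + M * η * Real.sinh (a * x))) := by
      funext x; rw [hV x]; ring
    rw [hVeq]
    refine (hQ.congr_deriv ?_).congr_of_eventuallyEq (Filter.Eventually.of_forall fun _ => rfl)
    symm
    beta_reduce
    have hpyth := Real.cosh_sq_sub_sinh_sq (a * t)
    set s := Real.sinh (a * t)
    set ch := Real.cosh (a * t)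
    rw [hac]
    field_simp
    linear_combination ((M * η - γ) * s ^ 2 * (-4)) * hcsq
  · have hsq : Real.sqrt (γ / (M * η)) = c / (M * η) := by
      rw [show γ / (M * η) = (c / (M * η)) ^ 2 by
        rw [div_pow, hcsq]; field_simp]
      exact Real.sqrt_sq (by positivity)
    have hu : Tendsto (fun t : ℝ => Real.exp (-(2 * a * t))) atTop (nhds 0) := by
      apply Real.tendsto_exp_atBot.comp
      have h1 : Tendsto (fun t : ℝ => 2 * a * t) atTop atTop :=
        (tendsto_const_mul_atTop_of_pos (by positivity : (0:ℝ) < 2 * a)).mpr tendsto_id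
      exact tendsto_neg_atBot_iff.mpr h1
    have hg : Tendsto (fun t : ℝ => (J / 2) *
        ((c + γ) + (c - γ) * Real.exp (-(2 * a * t))) /
          ((c + M * η) + (c - M * η) * Real.exp (-(2 * a * t)))) atTop
        (nhds ((J / 2) * Real.sqrt (γ / (M * η)))) := by
      have hnum : Tendsto (fun t : ℝ => (J / 2) *
          ((c + γ) + (c - γ) * Real.exp (-(2 * a * t)))) atTop
          (nhds ((J / 2) * ((c + γ) + (c - γ) * 0))) :=
        (tendsto_const_nhds.add (tendsto_const_nhds.mul hu)).const_mul _
      have hden : Tendsto (fun t : ℝ =>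
          ((c + M * η) + (c - M * η) * Real.exp (-(2 * a * t)))) atTop
          (nhds ((c + M * η) + (c - M * η) * 0)) :=
        tendsto_const_nhds.add (tendsto_const_nhds.mul hu)
      have hdne : (c + M * η) + (c - M * η) * 0 ≠ 0 := by
        simp only [mul_zero, add_zero]; positivity
      have h := hnum.div hden hdne
      have heq : (J / 2) * ((c + γ) + (c - γ) * 0) / ((c + M * η) + (c - M * η) * 0)
          = (J / 2) * Real.sqrt (γ / (M * η)) := by
        rw [hsq]
        simp only [mul_zero, add_zero]
        field_simp
        nlinarith [hcsq]
      rw [heq] at h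
      exact h.congr (fun t => by simp [Pi.div_apply])
    apply hg.congr'
    filter_upwards [eventually_ge_atTop (0:ℝ)] with t ht
    have hD := (hDpos t ht).ne'
    have hE := Real.exp_ne_zero (a * t)
    have hexp2 : Real.exp (-(2 * a * t)) = (Real.exp (a * t))⁻¹ * (Real.exp (a * t))⁻¹ := by
      rw [show -(2 * a * t) = -(a * t) + -(a * t) by ring, Real.exp_add, Real.exp_neg]
    have hD2 : (c + M * η) + (c - M * η) * Real.exp (-(2 * a * t)) ≠ 0 := by
      have : (c + M * η) + (c - M * η) * Real.exp (-(2 * a * t))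
          = 2 * (Real.exp (a * t))⁻¹ *
            (c * Real.cosh (a * t) + M * η * Real.sinh (a * t)) := by
        rw [hexp2, Real.cosh_eq, Real.sinh_eq, Real.exp_neg]
        field_simp
        ring
      rw [this]
      positivity
    rw [hV t]
    rw [div_eq_div_iff hD2 hD]
    rw [hexp2, Real.cosh_eq, Real.sinh_eq, Real.exp_neg]
    field_simp
    ring
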